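/- In the irrational rotation algebra, the element a_{pq} has a d-th root if and only if d divides both p and q; explicitly, if p = dp', q = dq' then (e^{-iλ p'q'(d-1)/2} a_{p',q'})^d = a_{pq}. Consequently a_{pq} has no nontrivial roots if and only if gcd(p,q) = 1. -/

import Mathlib

open Complex Finsupp

private lemma lexZ_le_iff (u m : ℤ × ℤ) :
    toLex u ≤ toLex m ↔ (u.1 < m.1 ∨ (u.1 = m.1 ∧ u.2 ≤ m.2)) := Prod.Lex.le_iff

private lemma lexZ_add_le {u v m m' : ℤ × ℤ} (h1 : toLex u ≤ toLex m)
    (h2 : toLex v ≤ toLex m') : toLex (u + v) ≤ toLex (m + m') := by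
  rw [lexZ_le_iff] at h1 h2 ⊢
  obtain ⟨u1, u2⟩ := u; obtain ⟨v1, v2⟩ := v; obtain ⟨m1, m2⟩ := m; obtain ⟨n1, n2⟩ := m'
  simp only [Prod.fst_add, Prod.snd_add] at *
  omega

private lemma lexZ_add_eq {u v m m' : ℤ × ℤ} (h1 : toLex u ≤ toLex m)
    (h2 : toLex v ≤ toLex m') (h : u + v = m + m') : u = m ∧ v = m' := by
  rw [lexZ_le_iff] at h1 h2
  obtain ⟨u1, u2⟩ := u; obtain ⟨v1, v2⟩ := v; obtain ⟨m1, m2⟩ := m; obtain ⟨n1, n2⟩ := m'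
  rw [Prod.ext_iff] at h
  simp only [Prod.fst_add, Prod.snd_add, Prod.mk.injEq] at *
  omega

section Aux

variable {A : Type} [Ring A] [Algebra ℂ A] (lam : ℝ) (b : Module.Basis (ℤ × ℤ) ℂ A)

/-- exponential factor -/
noncomputable def Efac (u v : ℤ × ℤ) : ℂ := Complex.exp (Complex.I * (lam * u.1 * v.2))

variable (hmulb : ∀ u v : ℤ × ℤ, b u * b v = Efac lam u v • b (u + v))

include hmulb

private lemma repr_mul (x y : A) (w : ℤ × ℤ) :
    b.repr (x * y) w =
      ∑ u ∈ (b.repr x).support, ∑ v ∈ (b.repr y).support,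
        (if u + v = w then b.repr x u * b.repr y v * Efac lam u v else 0) := by
  conv_lhs => rw [← b.linearCombination_repr x, ← b.linearCombination_repr y]
  rw [Finsupp.linearCombination_apply, Finsupp.linearCombination_apply,
    Finsupp.sum, Finsupp.sum, Finset.sum_mul]
  simp_rw [Finset.mul_sum, smul_mul_assoc, mul_smul_comm, hmulb, smul_smul]
  rw [map_sum, Finsupp.finset_sum_apply]
  refine Finset.sum_congr rfl fun u hu => ?_
  rw [map_sum, Finsupp.finset_sum_apply]
  refine Finset.sum_congr rfl fun v hv => ?_
  rw [map_smul, b.repr_self, Finsupp.smul_apply, Finsupp.single_apply]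
  split_ifs with h
  · rw [smul_eq_mul, mul_one]; ring
  · rw [smul_eq_mul, mul_zero]

private lemma repr_mul_top (x y : A) (m m' : ℤ × ℤ)
    (hx : ∀ u ∈ (b.repr x).support, toLex u ≤ toLex m)
    (hy : ∀ v ∈ (b.repr y).support, toLex v ≤ toLex m') :
    (∀ u ∈ (b.repr (x * y)).support, toLex u ≤ toLex (m + m')) ∧
      b.repr (x * y) (m + m') = b.repr x m * b.repr y m' * Efac lam m m' := by
  constructor
  · intro w hw
    by_contra hcon
    apply Finsupp.mem_support_iff.mp hw
    rw [repr_mul lam b hmulb]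
    refine Finset.sum_eq_zero fun u hu => Finset.sum_eq_zero fun v hv => ?_
    rw [if_neg]
    intro h
    exact hcon (h ▸ lexZ_add_le (hx u hu) (hy v hv))
  · rw [repr_mul lam b hmulb]
    by_cases hm : m ∈ (b.repr x).support
    · by_cases hm' : m' ∈ (b.repr y).support
      · rw [Finset.sum_eq_single m, Finset.sum_eq_single m']
        · rw [if_pos rfl]
        · intro v hv hne
          rw [if_neg]
          intro h
          exact hne (lexZ_add_eq (hx m hm) (hy v hv) h).2
        · intro h; exact absurd hm' h
        · intro u hu hne
          refine Finset.sum_eq_zero fun v hv => ?_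
          rw [if_neg]
          intro h
          exact hne (lexZ_add_eq (hx u hu) (hy v hv) h).1
        · intro h; exact absurd hm h
      · rw [Finsupp.notMem_support_iff.mp hm', mul_zero, zero_mul]
        refine Finset.sum_eq_zero fun u hu => Finset.sum_eq_zero fun v hv => ?_
        split_ifs with h
        · rcases lexZ_add_eq (hx u hu) (hy v hv) h with ⟨rfl, rfl⟩
          exact absurd hv hm'
        · rfl
    · rw [Finsupp.notMem_support_iff.mp hm, zero_mul, zero_mul]
      refine Finset.sum_eq_zero fun u hu => Finset.sum_eq_zero fun v hv => ?_
      split_ifs with h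
      · rcases lexZ_add_eq (hx u hu) (hy v hv) h with ⟨rfl, rfl⟩
        exact absurd hu hm
      · rfl

private lemma repr_pow (x : A) (m : ℤ × ℤ)
    (hx : ∀ u ∈ (b.repr x).support, toLex u ≤ toLex m) :
    ∀ k : ℕ, 1 ≤ k → ∃ c : ℂ, c ≠ 0 ∧
      (∀ u ∈ (b.repr (x ^ k)).support, toLex u ≤ toLex (k • m)) ∧
      b.repr (x ^ k) (k • m) = c * (b.repr x m) ^ k := by
  intro k
  induction k with
  | zero => omega
  | succ n ih =>
    intro _
    rcases Nat.eq_or_lt_of_le (Nat.one_le_iff_ne_zero.mpr (Nat.succ_ne_zero n)) with h1 | h1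
    · refine ⟨1, one_ne_zero, ?_⟩
      have hn : n = 0 := by omega
      subst hn
      simpa using hx
    · have hn : 1 ≤ n := by omega
      obtain ⟨c, hc, hsupp, heq⟩ := ih hn
      have hstep := repr_mul_top lam b hmulb x (x ^ n) m (n • m) hx hsupp
      have hpow : x ^ (n + 1) = x * x ^ n := pow_succ' x n
      have hsm : (n + 1) • m = m + n • m := by
        rw [add_nsmul, one_nsmul, add_comm]
      refine ⟨c * Efac lam m (n • m), ?_, ?_, ?_⟩
      · exact mul_ne_zero hc (Complex.exp_ne_zero _)
      · rw [hpow, hsm]; exact hstep.1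
      · rw [hpow, hsm, hstep.2, heq]; ring

end Aux

theorem rotationAlgebra_roots
    (lam : ℝ) (hlam : Irrational (lam / (2 * Real.pi)))
    (A : Type) [Ring A] [Algebra ℂ A]
    (a : ℤ → ℤ → A)
    (b : Module.Basis (ℤ × ℤ) ℂ A) (hb : ∀ n l : ℤ, b (n, l) = a n l)
    (hmul : ∀ n₁ l₁ n₂ l₂ : ℤ,
      a n₁ l₁ * a n₂ l₂ =
        Complex.exp (Complex.I * (lam * n₁ * l₂)) • a (n₁ + n₂) (l₁ + l₂)) :
    ∀ p q : ℤ,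
      (∀ d : ℕ, 2 ≤ d →
        ((∃ x : A, x ^ d = a p q) ↔ ((d : ℤ) ∣ p ∧ (d : ℤ) ∣ q))) ∧
      (∀ d : ℕ, 2 ≤ d → ∀ p' q' : ℤ, p = d * p' → q = d * q' →
        (Complex.exp (-(Complex.I * (lam * p' * q' * ((d : ℝ) - 1) / 2))) • a p' q') ^ d
          = a p q) ∧
      ((∀ d : ℕ, 2 ≤ d → ¬ ∃ x : A, x ^ d = a p q) ↔ Int.gcd p q = 1) := by
  -- basis multiplication rule
  have hmulb : ∀ u v : ℤ × ℤ, b u * b v = Efac lam u v • b (u + v) := by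
    rintro ⟨n₁, l₁⟩ ⟨n₂, l₂⟩
    rw [show ((n₁, l₁) : ℤ × ℤ) + (n₂, l₂) = (n₁ + n₂, l₁ + l₂) from rfl, hb, hb, hb, hmul]
    rfl
  -- powers of a single basis element
  have hpow_a : ∀ n l : ℤ, ∀ k : ℕ,
      (a n l) ^ (k + 1) =
        Complex.exp (Complex.I * (lam * n * l) * (k * (k + 1) / 2)) •
          a ((k + 1 : ℕ) * n) ((k + 1 : ℕ) * l) := by
    intro n l k
    induction k with
    | zero => simp
    | succ j ih =>
      rw [pow_succ', ih, mul_smul_comm, hmul, smul_smul, ← Complex.exp_add]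
      congr 1
      · push_cast
        ring
      · congr 1 <;> push_cast <;> ring
  -- the explicit root formula
  have explicit : ∀ d : ℕ, 1 ≤ d → ∀ p' q' : ℤ,
      (Complex.exp (-(Complex.I * (lam * p' * q' * ((d : ℝ) - 1) / 2))) • a p' q') ^ d
        = a (d * p') (d * q') := by
    intro d hd p' q'
    obtain ⟨k, rfl⟩ : ∃ k, d = k + 1 := ⟨d - 1, by omega⟩
    rw [smul_pow, hpow_a, smul_smul, ← Complex.exp_nat_mul, ← Complex.exp_add]
    convert one_smul ℂ (a (((k + 1 : ℕ) : ℤ) * p') (((k + 1 : ℕ) : ℤ) * q')) using 2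
    refine Complex.exp_eq_one_iff.mpr ⟨0, ?_⟩
    push_cast
    ring
  -- forward: existence of root implies divisibility
  have fwd : ∀ p q : ℤ, ∀ d : ℕ, 2 ≤ d → (∃ x : A, x ^ d = a p q) →
      ((d : ℤ) ∣ p ∧ (d : ℤ) ∣ q) := by
    intro p q d hd ⟨x, hx⟩
    have hx0 : x ≠ 0 := by
      rintro rfl
      rw [zero_pow (by omega)] at hx
      exact b.ne_zero (p, q) (by rw [hb]; exact hx.symm)
    have hsne : (b.repr x).support.Nonempty := by
      rw [Finsupp.support_nonempty_iff]
      simpa using hx0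
    have hTne : ((b.repr x).support.image (toLex : ℤ × ℤ → Lex (ℤ × ℤ))).Nonempty :=
      hsne.image _
    set m : ℤ × ℤ := ofLex (((b.repr x).support.image toLex).max' hTne) with hm
    have hbound : ∀ u ∈ (b.repr x).support, toLex u ≤ toLex m := by
      intro u hu
      have : toLex u ∈ (b.repr x).support.image toLex := Finset.mem_image_of_mem _ hu
      simpa [hm] using Finset.le_max' _ _ this
    have hmem : m ∈ (b.repr x).support := by
      have : toLex m ∈ (b.repr x).support.image toLex := by
        simpa [hm] using Finset.max'_mem _ hTne
      obtain ⟨u, hu, hue⟩ := Finset.mem_image.mp this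
      rwa [show u = m from toLex.injective hue] at hu
    obtain ⟨c, hc, _, heq⟩ := repr_pow lam b hmulb x m hbound d (by omega)
    have hne : b.repr (x ^ d) (d • m) ≠ 0 := by
      rw [heq]
      exact mul_ne_zero hc (pow_ne_zero _ (Finsupp.mem_support_iff.mp hmem))
    rw [hx, ← hb, b.repr_self] at hne
    have : d • m = (p, q) := by
      by_contra h
      rw [Finsupp.single_apply, if_neg (fun h' => h h'.symm)] at hne
      exact hne rfl
    have h1 : (d : ℤ) * m.1 = p := by
      have := congrArg Prod.fst this
      simpa [Prod.smul_def, smul_eq_mul] using this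
    have h2 : (d : ℤ) * m.2 = q := by
      have := congrArg Prod.snd this
      simpa [Prod.smul_def, smul_eq_mul] using this
    exact ⟨⟨m.1, h1.symm⟩, ⟨m.2, h2.symm⟩⟩
  intro p q
  have part1 : ∀ d : ℕ, 2 ≤ d →
      ((∃ x : A, x ^ d = a p q) ↔ ((d : ℤ) ∣ p ∧ (d : ℤ) ∣ q)) := by
    intro d hd
    constructor
    · exact fwd p q d hd
    · rintro ⟨⟨p', rfl⟩, ⟨q', rfl⟩⟩
      exact ⟨_, explicit d (by omega) p' q'⟩
  refine ⟨part1, ?_, ?_⟩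
  · intro d hd p' q' hp hq
    rw [hp, hq]
    exact explicit d (by omega) p' q'
  · constructor
    · intro h
      by_contra hg
      rcases Nat.eq_zero_or_pos (Int.gcd p q) with h0 | hpos
      · rw [Int.gcd_eq_zero_iff] at h0
        exact h 2 le_rfl ((part1 2 le_rfl).mpr ⟨h0.1 ▸ dvd_zero 2, h0.2 ▸ dvd_zero 2⟩)
      · have hg2 : 2 ≤ Int.gcd p q := by omega
        exact h _ hg2 ((part1 _ hg2).mpr
          ⟨Int.gcd_dvd_left p q, Int.gcd_dvd_right p q⟩)
    · intro hg d hd hex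
      obtain ⟨h1, h2⟩ := (part1 d hd).mp hex
      have : (d : ℤ) ∣ (Int.gcd p q : ℤ) := by exact_mod_cast Int.dvd_gcd h1 h2
      rw [hg] at this
      have := Int.le_of_dvd one_pos this
      omega
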